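/- The NIG density integrates to 1: for α > |β| ≥ 0, δ > 0, μ ∈ ℝ, ∫_ℝ (αδ/π)·K_1(αδ√(1 + ((x−μ)/δ)²))/√(δ² + (x−μ)²)·exp(δ√(α² − β²) + β(x−μ)) dx = 1. -/

import Mathlib

open MeasureTheory Real Set

/-- `K₁ x = (1/2) ∫₀^∞ exp (-(x/2)(y + 1/y)) dy`, the modified Bessel function of the
second kind of order one. -/
noncomputable def besselK1 (x : ℝ) : ℝ :=
  (1 / 2) * ∫ y in Set.Ioi (0 : ℝ), Real.exp (-(x / 2) * (y + 1 / y))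

lemma image_inv_mul (c : ℝ) (hc : 0 < c) : (fun t : ℝ => c / t) '' Set.Ioi 0 = Set.Ioi 0 := by
  ext y
  constructor
  · rintro ⟨t, ht, rfl⟩
    exact div_pos hc ht
  · intro hy
    exact ⟨c / y, div_pos hc hy, by field_simp⟩

lemma subst_inv (c : ℝ) (hc : 0 < c) (g : ℝ → ℝ) :
    ∫ y in Set.Ioi (0:ℝ), g y = ∫ t in Set.Ioi (0:ℝ), c / t ^ 2 * g (c / t) := by
  have hderiv : ∀ t ∈ Set.Ioi (0:ℝ),
      HasDerivWithinAt (fun t : ℝ => c / t) (-(c / t ^ 2)) (Set.Ioi 0) t := by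
    intro t ht
    have h := ((hasDerivAt_inv (ne_of_gt ht)).const_mul c).hasDerivWithinAt (s := Set.Ioi (0:ℝ))
    have h1 : (fun t : ℝ => c * t⁻¹) = fun t : ℝ => c / t := by funext x; rw [div_eq_mul_inv]
    have h2 : c * -(t ^ 2)⁻¹ = -(c / t ^ 2) := by field_simp
    rwa [h1, h2] at h
  have hinj : Set.InjOn (fun t : ℝ => c / t) (Set.Ioi 0) := by
    intro a ha b hb h
    simp only at h
    have ha0 : a ≠ 0 := ne_of_gt ha
    have hb0 : b ≠ 0 := ne_of_gt hb
    field_simp at h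
    exact h.symm
  conv_lhs => rw [← image_inv_mul c hc]
  rw [integral_image_eq_integral_abs_deriv_smul measurableSet_Ioi hderiv hinj]
  refine setIntegral_congr_fun measurableSet_Ioi (fun t ht => ?_)
  rw [abs_neg, abs_of_pos (div_pos hc (pow_pos ht 2)), smul_eq_mul]

lemma besselK1_rep (a g : ℝ) (ha : 0 < a) (hg : 0 < g) :
    besselK1 (a * g)
      = ∫ t in Set.Ioi (0:ℝ), g / (2 * a * t ^ 2) * Real.exp (-(g ^ 2 / (2 * t)) - a ^ 2 * t / 2) := by
  unfold besselK1
  rw [subst_inv (g / a) (div_pos hg ha), ← MeasureTheory.integral_const_mul]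
  refine setIntegral_congr_fun measurableSet_Ioi (fun t ht => ?_)
  have ht0 : (0:ℝ) < t := ht
  have hexp : -(a * g / 2) * (g / a / t + 1 / (g / a / t)) = -(g ^ 2 / (2 * t)) - a ^ 2 * t / 2 := by
    field_simp
    ring
  rw [hexp]
  field_simp

lemma gauss_integrable (b t : ℝ) (ht : 0 < t) :
    Integrable (fun u : ℝ => Real.exp (b * u - u ^ 2 / (2 * t))) := by
  have h1 : ∀ u : ℝ, Real.exp (b * u - u ^ 2 / (2 * t))
      = Real.exp (b ^ 2 * t / 2) * Real.exp (-(1 / (2 * t)) * (u - b * t) ^ 2) := by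
    intro u; rw [← Real.exp_add]; congr 1; field_simp; ring
  simp only [h1]
  exact ((integrable_exp_neg_mul_sq (by positivity : (0:ℝ) < 1 / (2 * t))).comp_sub_right
    (b * t)).const_mul _

lemma gauss_integral (b t : ℝ) (ht : 0 < t) :
    ∫ u : ℝ, Real.exp (b * u - u ^ 2 / (2 * t))
      = Real.sqrt (2 * Real.pi * t) * Real.exp (b ^ 2 * t / 2) := by
  have h1 : ∀ u : ℝ, Real.exp (b * u - u ^ 2 / (2 * t))
      = Real.exp (b ^ 2 * t / 2) * Real.exp (-(1 / (2 * t)) * (u - b * t) ^ 2) := by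
    intro u; rw [← Real.exp_add]; congr 1; field_simp; ring
  simp only [h1]
  rw [MeasureTheory.integral_const_mul,
    integral_sub_right_eq_self (fun u : ℝ => Real.exp (-(1 / (2 * t)) * u ^ 2)) (b * t),
    integral_gaussian]
  rw [show Real.pi / (1 / (2 * t)) = 2 * Real.pi * t by field_simp]
  ring

lemma ig_aux (δ γ : ℝ) (hδ : 0 < δ) (hγ : 0 < γ) :
    IntegrableOn (fun t : ℝ => 1 / (t * Real.sqrt t) * Real.exp (-(δ^2/(2*t)) - γ^2*t/2)) (Set.Ioi 0)
    ∧ ∫ t in Set.Ioi (0:ℝ), 1 / (t * Real.sqrt t) * Real.exp (-(δ^2/(2*t)) - γ^2*t/2)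
      = Real.sqrt (2*Real.pi) / δ * Real.exp (-(δ*γ)) := by
  set S : ℝ → ℝ := fun t => (δ / Real.sqrt t - γ * Real.sqrt t) / Real.sqrt 2 with hS
  set S' : ℝ → ℝ := fun t => (-(δ / (2 * t * Real.sqrt t)) - γ / (2 * Real.sqrt t)) / Real.sqrt 2
    with hS'def
  have h2pos : (0:ℝ) < Real.sqrt 2 := Real.sqrt_pos.mpr (by norm_num)
  have h2sq : Real.sqrt 2 * Real.sqrt 2 = 2 := Real.mul_self_sqrt (by norm_num)
  -- derivative
  have hS' : ∀ t ∈ Set.Ioi (0:ℝ), HasDerivWithinAt S (S' t) (Set.Ioi 0) t := by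
    intro t ht
    have ht0 : (0:ℝ) < t := ht
    have hst : Real.sqrt t * Real.sqrt t = t := Real.mul_self_sqrt ht0.le
    have hstpos : 0 < Real.sqrt t := Real.sqrt_pos.mpr ht0
    have hsq : HasDerivAt Real.sqrt (1 / (2 * Real.sqrt t)) t := Real.hasDerivAt_sqrt ht0.ne'
    have h1 : HasDerivAt (fun t : ℝ => δ / Real.sqrt t - γ * Real.sqrt t)
        (δ * -(1 / (2 * Real.sqrt t) / (Real.sqrt t) ^ 2) - γ * (1 / (2 * Real.sqrt t))) t := by
      have ha := ((hsq.inv hstpos.ne').const_mul δ).sub (hsq.const_mul γ)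
      simpa [div_eq_mul_inv, Pi.sub_def] using ha
    have h2 := h1.div_const (Real.sqrt 2)
    have : (δ * -(1 / (2 * Real.sqrt t) / (Real.sqrt t) ^ 2) - γ * (1 / (2 * Real.sqrt t))) /
        Real.sqrt 2 = S' t := by
      rw [hS'def]
      rw [sq]
      field_simp
      ring_nf
      rw [Real.sq_sqrt ht0.le]
    rw [this] at h2
    exact h2.hasDerivWithinAt
  -- injectivity
  have hanti : StrictAntiOn S (Set.Ioi 0) := by
    intro a ha b hb hab
    have ha0 : (0:ℝ) < a := ha
    have hb0 : (0:ℝ) < b := hb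
    have hsa : Real.sqrt a < Real.sqrt b := Real.sqrt_lt_sqrt ha0.le hab
    have hsapos : 0 < Real.sqrt a := Real.sqrt_pos.mpr ha0
    have h1 : δ / Real.sqrt b < δ / Real.sqrt a := by
      apply div_lt_div_of_pos_left hδ hsapos hsa
    have h2 : γ * Real.sqrt a < γ * Real.sqrt b := by
      exact mul_lt_mul_of_pos_left hsa hγ
    have : δ / Real.sqrt b - γ * Real.sqrt b < δ / Real.sqrt a - γ * Real.sqrt a := by linarith
    exact div_lt_div_of_pos_right this h2pos
  have hinj : Set.InjOn S (Set.Ioi 0) := hanti.injOn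
  -- S-squared formula
  have hSsq : ∀ t ∈ Set.Ioi (0:ℝ), (S t)^2 = δ^2/(2*t) + γ^2*t/2 - δ*γ := by
    intro t ht
    have ht0 : (0:ℝ) < t := ht
    have hst : Real.sqrt t * Real.sqrt t = t := Real.mul_self_sqrt ht0.le
    have hstpos : (0:ℝ) < Real.sqrt t := Real.sqrt_pos.mpr ht0
    rw [hS]
    field_simp
    have e1 : (Real.sqrt t * Real.sqrt 2)^2 = 2*t := by
      rw [mul_pow, Real.sq_sqrt ht0.le, Real.sq_sqrt (by norm_num : (0:ℝ) ≤ 2)]; ring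
    have e2 : Real.sqrt t * (γ * Real.sqrt t) = γ * t := by linear_combination γ * hst
    rw [Real.sq_sqrt ht0.le, Real.sq_sqrt (by norm_num : (0:ℝ) ≤ 2)]
    ring
  -- image is univ
  have himg : S '' Set.Ioi 0 = Set.univ := by
    refine Set.eq_univ_of_forall fun y => ?_
    have hq : (Real.sqrt (2*y^2+4*γ*δ))^2 = 2*y^2+4*γ*δ := Real.sq_sqrt (by positivity)
    set r : ℝ := (Real.sqrt (2*y^2+4*γ*δ) - Real.sqrt 2 * y)/(2*γ) with hrdef
    have hr : 0 < r := by
      have h1 : Real.sqrt (2*y^2) < Real.sqrt (2*y^2+4*γ*δ) :=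
        Real.sqrt_lt_sqrt (by positivity) (by nlinarith)
      have h2 : Real.sqrt 2 * y ≤ Real.sqrt (2*y^2) := by
        rw [Real.sqrt_mul (by norm_num) (y^2), Real.sqrt_sq_eq_abs]
        exact mul_le_mul_of_nonneg_left (le_abs_self y) h2pos.le
      apply div_pos (by linarith) (by linarith)
    refine ⟨r^2, mem_Ioi.mpr (by positivity), ?_⟩
    have hkey : γ*r^2 + Real.sqrt 2 * y * r - δ = 0 := by
      have h3 : 2*γ*r + Real.sqrt 2 * y = Real.sqrt (2*y^2+4*γ*δ) := by
        rw [hrdef]; field_simp; ring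
      have h4 : (2*γ*r + Real.sqrt 2*y)^2 = 2*y^2+4*γ*δ := by rw [h3]; exact hq
      have h5 : γ * (γ*r^2 + Real.sqrt 2*y*r - δ) = 0 := by
        linear_combination h4 / 4 - y ^ 2 / 4 * h2sq
      exact (mul_eq_zero.1 h5).resolve_left hγ.ne'
    show (δ / Real.sqrt (r^2) - γ * Real.sqrt (r^2)) / Real.sqrt 2 = y
    rw [Real.sqrt_sq hr.le]
    rw [div_eq_iff h2pos.ne', div_sub' hr.ne', div_eq_iff hr.ne']
    nlinarith [hkey, h2sq]
  -- main substitution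
  have hsub := integral_image_eq_integral_abs_deriv_smul measurableSet_Ioi hS' hinj
      (fun y => Real.exp (-y^2))
  rw [himg, Measure.restrict_univ] at hsub
  have hgauss : ∫ y : ℝ, Real.exp (-y^2) = Real.sqrt Real.pi := by
    simpa using integral_gaussian 1
  have hexpint : Integrable (fun y : ℝ => Real.exp (-y^2)) := by
    simpa using integrable_exp_neg_mul_sq (by norm_num : (0:ℝ) < 1)
  have hint0 : IntegrableOn (fun t => |S' t| • Real.exp (-(S t)^2)) (Set.Ioi 0) :=
    (integrableOn_image_iff_integrableOn_abs_deriv_smul measurableSet_Ioi hS' hinj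
      (fun y => Real.exp (-y^2))).1 (by rw [himg]; exact hexpint.integrableOn)
  set A : ℝ → ℝ := fun t => δ/(t*Real.sqrt t) * Real.exp (-(S t)^2) with hA
  set B : ℝ → ℝ := fun t => γ/Real.sqrt t * Real.exp (-(S t)^2) with hB
  have habs : ∀ t ∈ Set.Ioi (0:ℝ),
      |S' t| • Real.exp (-(S t)^2) = 1/(2*Real.sqrt 2) * (A t + B t) := by
    intro t ht
    have ht0 : (0:ℝ) < t := ht
    have hstpos : 0 < Real.sqrt t := Real.sqrt_pos.mpr ht0
    have hnum : -(δ/(2*t*Real.sqrt t)) - γ/(2*Real.sqrt t) ≤ 0 := by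
      have h1 : 0 < δ/(2*t*Real.sqrt t) := by positivity
      have h2 : 0 < γ/(2*Real.sqrt t) := by positivity
      linarith
    rw [hS'def, smul_eq_mul, abs_div, abs_of_pos h2pos, abs_of_nonpos hnum]
    simp only [hA, hB]
    field_simp
    ring
  have hsum_int : IntegrableOn (fun t => 1/(2*Real.sqrt 2) * (A t + B t)) (Set.Ioi 0) :=
    (integrableOn_congr_fun habs measurableSet_Ioi).mp hint0
  have hABint : IntegrableOn (fun t => A t + B t) (Set.Ioi 0) := by
    have h := hsum_int.const_mul (2*Real.sqrt 2)
    have heq : (fun t => (2*Real.sqrt 2) * (1/(2*Real.sqrt 2) * (A t + B t)))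
        = fun t => A t + B t := by
      funext t; field_simp
    rwa [heq] at h
  have hmeasA : AEStronglyMeasurable A (volume.restrict (Set.Ioi 0)) := by
    apply Measurable.aestronglyMeasurable
    simp only [hA, hS]
    fun_prop
  have hmeasB : AEStronglyMeasurable B (volume.restrict (Set.Ioi 0)) := by
    apply Measurable.aestronglyMeasurable
    simp only [hB, hS]
    fun_prop
  have hApos : ∀ t ∈ Set.Ioi (0:ℝ), 0 ≤ A t := fun t ht =>
    mul_nonneg (div_nonneg hδ.le (mul_nonneg (le_of_lt ht) (Real.sqrt_nonneg t)))
      (Real.exp_nonneg _)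
  have hBpos : ∀ t ∈ Set.Ioi (0:ℝ), 0 ≤ B t := fun t ht =>
    mul_nonneg (div_nonneg hγ.le (Real.sqrt_nonneg t)) (Real.exp_nonneg _)
  have hAint : IntegrableOn A (Set.Ioi 0) := by
    apply Integrable.mono' hABint hmeasA
    filter_upwards [ae_restrict_mem measurableSet_Ioi] with t ht
    rw [Real.norm_eq_abs, abs_of_nonneg (hApos t ht)]
    have := hBpos t ht
    linarith
  have hBint : IntegrableOn B (Set.Ioi 0) := by
    apply Integrable.mono' hABint hmeasB
    filter_upwards [ae_restrict_mem measurableSet_Ioi] with t ht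
    rw [Real.norm_eq_abs, abs_of_nonneg (hBpos t ht)]
    have := hApos t ht
    linarith
  have hBA : ∫ t in Set.Ioi (0:ℝ), B t = ∫ t in Set.Ioi (0:ℝ), A t := by
    rw [subst_inv (δ^2/γ^2) (by positivity) B]
    refine setIntegral_congr_fun measurableSet_Ioi (fun t ht => ?_)
    have ht0 : (0:ℝ) < t := ht
    have hct : (0:ℝ) < δ^2/γ^2/t := by positivity
    have hstpos : 0 < Real.sqrt t := Real.sqrt_pos.mpr ht0
    have hst : Real.sqrt t * Real.sqrt t = t := Real.mul_self_sqrt ht0.le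
    simp only [hA, hB]
    have hsq1 : (S (δ^2/γ^2/t))^2 = (S t)^2 := by
      rw [hSsq _ (mem_Ioi.mpr hct), hSsq t ht]
      field_simp
      ring
    have hsc : Real.sqrt (δ^2/γ^2/t) = δ/γ/Real.sqrt t := by
      rw [show δ^2/γ^2/t = (δ/γ)^2/t by ring, Real.sqrt_div (by positivity) t,
        Real.sqrt_sq (by positivity)]
    rw [hsq1, hsc]
    field_simp
    linear_combination hst
  have hsumval : Real.sqrt Real.pi
      = ∫ t in Set.Ioi (0:ℝ), 1/(2*Real.sqrt 2) * (A t + B t) := by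
    calc Real.sqrt Real.pi = ∫ t in Set.Ioi (0:ℝ), |S' t| • Real.exp (-(S t)^2) := by
          rw [← hgauss]; exact hsub
      _ = _ := setIntegral_congr_fun measurableSet_Ioi habs
  have hsplit : ∫ t in Set.Ioi (0:ℝ), 1/(2*Real.sqrt 2) * (A t + B t)
      = 1/(2*Real.sqrt 2) * ((∫ t in Set.Ioi (0:ℝ), A t) + ∫ t in Set.Ioi (0:ℝ), B t) := by
    rw [MeasureTheory.integral_const_mul, integral_add hAint hBint]
  have hAval : ∫ t in Set.Ioi (0:ℝ), A t = Real.sqrt (2*Real.pi) := by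
    have h7 : Real.sqrt Real.pi
        = 1/(2*Real.sqrt 2) * (2 * ∫ t in Set.Ioi (0:ℝ), A t) := by
      rw [hsumval, hsplit, hBA]; ring
    rw [Real.sqrt_mul (by norm_num : (0:ℝ) ≤ 2)]
    have h8 : Real.sqrt 2 * Real.sqrt Real.pi
        = Real.sqrt 2 * (1/(2*Real.sqrt 2) * (2 * ∫ t in Set.Ioi (0:ℝ), A t)) := by
      rw [← h7]
    rw [h8]
    field_simp
  have hAT : ∀ t ∈ Set.Ioi (0:ℝ),
      (δ * Real.exp (δ*γ))⁻¹ * A t = 1/(t*Real.sqrt t) * Real.exp (-(δ^2/(2*t)) - γ^2*t/2) := by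
    intro t ht
    have ht0 : (0:ℝ) < t := ht
    have hstpos : 0 < Real.sqrt t := Real.sqrt_pos.mpr ht0
    simp only [hA]
    rw [show -(S t)^2 = δ*γ + (-(δ^2/(2*t)) - γ^2*t/2) by rw [hSsq t ht]; ring, Real.exp_add,
      mul_inv]
    have h9 : Real.exp (δ*γ) ≠ 0 := Real.exp_ne_zero _
    field_simp
  constructor
  · exact (integrableOn_congr_fun hAT measurableSet_Ioi).mp
      (hAint.const_mul (δ * Real.exp (δ*γ))⁻¹)
  · rw [← setIntegral_congr_fun measurableSet_Ioi hAT, MeasureTheory.integral_const_mul, hAval,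
      mul_inv, Real.exp_neg]
    ring



theorem nig_density_integral_eq_one
    (α β δ μ : ℝ) (hα : |β| < α) (hδ : 0 < δ) :
    ∫ x : ℝ,
      (α * δ / Real.pi) *
        besselK1 (α * δ * Real.sqrt (1 + ((x - μ) / δ) ^ 2)) /
          Real.sqrt (δ ^ 2 + (x - μ) ^ 2) *
        Real.exp (δ * Real.sqrt (α ^ 2 - β ^ 2) + β * (x - μ)) = 1 := by
  have hα0 : 0 < α := lt_of_le_of_lt (abs_nonneg β) hα
  have hβα : β^2 < α^2 := by nlinarith [sq_abs β, abs_nonneg β]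
  set γ : ℝ := Real.sqrt (α ^ 2 - β ^ 2) with hγdef
  have hγsq : γ^2 = α^2 - β^2 := Real.sq_sqrt (by linarith)
  have hγ0 : 0 < γ := Real.sqrt_pos.mpr (by linarith)
  have h0 : (∫ x : ℝ, (α * δ / Real.pi) *
        besselK1 (α * δ * Real.sqrt (1 + ((x - μ) / δ) ^ 2)) /
          Real.sqrt (δ ^ 2 + (x - μ) ^ 2) *
        Real.exp (δ * γ + β * (x - μ)))
      = ∫ u : ℝ, (α * δ / Real.pi) *
        besselK1 (α * δ * Real.sqrt (1 + (u / δ) ^ 2)) /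
          Real.sqrt (δ ^ 2 + u ^ 2) *
        Real.exp (δ * γ + β * u) :=
    integral_sub_right_eq_self (fun u => (α * δ / Real.pi) *
        besselK1 (α * δ * Real.sqrt (1 + (u / δ) ^ 2)) /
          Real.sqrt (δ ^ 2 + u ^ 2) *
        Real.exp (δ * γ + β * u)) μ
  rw [h0]
  set H : ℝ → ℝ → ℝ := fun u t =>
    δ/(2*Real.pi*t^2) * Real.exp (δ*γ + β*u - (δ^2+u^2)/(2*t) - α^2*t/2) with hH
  have step1 : ∀ u : ℝ, (α * δ / Real.pi) *
        besselK1 (α * δ * Real.sqrt (1 + (u / δ) ^ 2)) /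
          Real.sqrt (δ ^ 2 + u ^ 2) * Real.exp (δ * γ + β * u)
      = ∫ t in Set.Ioi (0:ℝ), H u t := by
    intro u
    have hgpos : 0 < Real.sqrt (δ^2+u^2) := Real.sqrt_pos.mpr (by positivity)
    have hg2 : Real.sqrt (δ^2+u^2)^2 = δ^2+u^2 := Real.sq_sqrt (by positivity)
    have hrw : α * δ * Real.sqrt (1 + (u/δ)^2) = α * Real.sqrt (δ^2+u^2) := by
      rw [show δ^2+u^2 = δ^2*(1+(u/δ)^2) by field_simp, Real.sqrt_mul (sq_nonneg δ),
        Real.sqrt_sq hδ.le]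
      ring
    rw [hrw, besselK1_rep α (Real.sqrt (δ^2+u^2)) hα0 hgpos]
    rw [show (α * δ / Real.pi) * (∫ t in Set.Ioi (0:ℝ), Real.sqrt (δ^2+u^2)/(2*α*t^2) *
          Real.exp (-(Real.sqrt (δ^2+u^2)^2/(2*t)) - α^2*t/2)) / Real.sqrt (δ^2+u^2) *
          Real.exp (δ*γ + β*u)
        = (α * δ / Real.pi / Real.sqrt (δ^2+u^2) * Real.exp (δ*γ + β*u)) *
          ∫ t in Set.Ioi (0:ℝ), Real.sqrt (δ^2+u^2)/(2*α*t^2) *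
          Real.exp (-(Real.sqrt (δ^2+u^2)^2/(2*t)) - α^2*t/2) by ring]
    rw [← MeasureTheory.integral_const_mul]
    refine setIntegral_congr_fun measurableSet_Ioi (fun t ht => ?_)
    have ht0 : (0:ℝ) < t := ht
    simp only [hH]
    rw [hg2, show δ*γ + β*u - (δ^2+u^2)/(2*t) - α^2*t/2
        = (δ*γ + β*u) + (-((δ^2+u^2)/(2*t)) - α^2*t/2) by ring]
    conv_rhs => rw [Real.exp_add]
    have hπ : Real.pi ≠ 0 := Real.pi_ne_zero
    have hcoef : α*δ/Real.pi/Real.sqrt (δ^2+u^2) * (Real.sqrt (δ^2+u^2)/(2*α*t^2))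
        = δ/(2*Real.pi*t^2) := by
      field_simp
    linear_combination (Real.exp (δ*γ+β*u) *
      Real.exp (-((δ^2+u^2)/(2*t)) - α^2*t/2)) * hcoef
  set G : ℝ → ℝ := fun t => (δ/Real.sqrt (2*Real.pi) * Real.exp (δ*γ)) *
    (1/(t*Real.sqrt t) * Real.exp (-(δ^2/(2*t)) - γ^2*t/2)) with hG
  have hdecomp : ∀ t ∈ Set.Ioi (0:ℝ), ∀ u : ℝ,
      H u t = (δ/(2*Real.pi*t^2) * Real.exp (δ*γ - δ^2/(2*t) - α^2*t/2))
        * Real.exp (β*u - u^2/(2*t)) := by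
    intro t ht u
    simp only [hH]
    conv_rhs => rw [mul_assoc, ← Real.exp_add]
    congr 1
    ring
  have step2a : ∀ t ∈ Set.Ioi (0:ℝ), Integrable (fun u => H u t) := by
    intro t ht
    have ht0 : (0:ℝ) < t := ht
    have heq : (fun u => H u t) = fun u =>
        (δ/(2*Real.pi*t^2) * Real.exp (δ*γ - δ^2/(2*t) - α^2*t/2))
        * Real.exp (β*u - u^2/(2*t)) := funext fun u => hdecomp t ht u
    rw [heq]
    exact (gauss_integrable β t ht0).const_mul _
  have step2b : ∀ t ∈ Set.Ioi (0:ℝ), (∫ u : ℝ, H u t) = G t := by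
    intro t ht
    have ht0 : (0:ℝ) < t := ht
    have heq : (fun u => H u t) = fun u =>
        (δ/(2*Real.pi*t^2) * Real.exp (δ*γ - δ^2/(2*t) - α^2*t/2))
        * Real.exp (β*u - u^2/(2*t)) := funext fun u => hdecomp t ht u
    rw [heq, MeasureTheory.integral_const_mul, gauss_integral β t ht0]
    simp only [hG]
    have hs2π : Real.sqrt (2*Real.pi*t) = Real.sqrt (2*Real.pi) * Real.sqrt t :=
      Real.sqrt_mul (by positivity) t
    have h2π : Real.sqrt (2*Real.pi) * Real.sqrt (2*Real.pi) = 2*Real.pi :=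
      Real.mul_self_sqrt (by positivity)
    have hst : Real.sqrt t * Real.sqrt t = t := Real.mul_self_sqrt ht0.le
    have hexp1 : Real.exp (δ*γ - δ^2/(2*t) - α^2*t/2) * Real.exp (β^2*t/2)
        = Real.exp (δ*γ) * Real.exp (-(δ^2/(2*t)) - γ^2*t/2) := by
      rw [← Real.exp_add, ← Real.exp_add]
      congr 1
      linear_combination (t/2) * hγsq
    rw [hs2π, show δ/(2*Real.pi*t^2) * Real.exp (δ*γ - δ^2/(2*t) - α^2*t/2) *
          (Real.sqrt (2*Real.pi) * Real.sqrt t * Real.exp (β^2*t/2))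
        = (Real.sqrt (2*Real.pi) * Real.sqrt t * δ/(2*Real.pi*t^2)) *
          (Real.exp (δ*γ - δ^2/(2*t) - α^2*t/2) * Real.exp (β^2*t/2)) by ring, hexp1]
    have hπ0 : (0:ℝ) < Real.pi := Real.pi_pos
    have hs2π0 : (0:ℝ) < Real.sqrt (2*Real.pi) := Real.sqrt_pos.mpr (by positivity)
    have hst0 : (0:ℝ) < Real.sqrt t := Real.sqrt_pos.mpr ht0
    have h2' : Real.sqrt 2 * Real.sqrt 2 = 2 := Real.mul_self_sqrt (by norm_num)
    have hπ' : Real.sqrt Real.pi * Real.sqrt Real.pi = Real.pi :=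
      Real.mul_self_sqrt Real.pi_pos.le
    field_simp
    rw [Real.sq_sqrt (by positivity), Real.sq_sqrt ht0.le]
  have hmeasH : AEStronglyMeasurable (Function.uncurry H)
      ((volume : Measure ℝ).prod (volume.restrict (Set.Ioi 0))) := by
    apply Measurable.aestronglyMeasurable
    simp only [hH, Function.uncurry]
    fun_prop
  have hGint : IntegrableOn G (Set.Ioi 0) := (ig_aux δ γ hδ hγ0).1.const_mul _
  have hHint : Integrable (Function.uncurry H)
      ((volume : Measure ℝ).prod (volume.restrict (Set.Ioi 0))) := by
    rw [integrable_prod_iff' hmeasH]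
    constructor
    · exact (ae_restrict_iff' measurableSet_Ioi).2
        (Filter.Eventually.of_forall fun t ht => step2a t ht)
    · apply Integrable.congr hGint
      refine (ae_restrict_iff' measurableSet_Ioi).2
        (Filter.Eventually.of_forall fun t ht => ?_)
      have hpos : ∀ u : ℝ, 0 ≤ H u t := fun u => by
        simp only [hH]
        exact mul_nonneg (div_nonneg hδ.le (by positivity)) (Real.exp_nonneg _)
      have hnorm : (fun u : ℝ => ‖H u t‖) = fun u => H u t :=
        funext fun u => Real.norm_of_nonneg (hpos u)
      show G t = ∫ u : ℝ, ‖H u t‖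
      rw [hnorm, step2b t ht]
  calc (∫ u : ℝ, (α * δ / Real.pi) *
        besselK1 (α * δ * Real.sqrt (1 + (u / δ) ^ 2)) /
          Real.sqrt (δ ^ 2 + u ^ 2) * Real.exp (δ * γ + β * u))
      = ∫ u : ℝ, ∫ t in Set.Ioi (0:ℝ), H u t := by
        exact integral_congr_ae (Filter.Eventually.of_forall step1)
    _ = ∫ t in Set.Ioi (0:ℝ), ∫ u : ℝ, H u t := integral_integral_swap hHint
    _ = ∫ t in Set.Ioi (0:ℝ), G t := setIntegral_congr_fun measurableSet_Ioi step2b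
    _ = (δ/Real.sqrt (2*Real.pi) * Real.exp (δ*γ)) *
        ∫ t in Set.Ioi (0:ℝ), 1/(t*Real.sqrt t) * Real.exp (-(δ^2/(2*t)) - γ^2*t/2) :=
        MeasureTheory.integral_const_mul _ _
    _ = 1 := by
        rw [(ig_aux δ γ hδ hγ0).2]
        have h2π0 : Real.sqrt (2*Real.pi) ≠ 0 :=
          ne_of_gt (Real.sqrt_pos.mpr (by positivity))
        rw [show δ/Real.sqrt (2*Real.pi) * Real.exp (δ*γ) *
            (Real.sqrt (2*Real.pi)/δ * Real.exp (-(δ*γ)))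
          = (Real.sqrt (2*Real.pi)/Real.sqrt (2*Real.pi)) * (δ/δ) *
            (Real.exp (δ*γ) * Real.exp (-(δ*γ))) by ring,
          div_self h2π0, div_self hδ.ne', ← Real.exp_add]
        simp
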